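/- The operator S defined by S(f)(x) = f(x) − x·f(x−1) is a bijective ℂₚ-linear automorphism of C(ℤₚ, ℂₚ). Moreover, if g = Σₖ bₖ βₖ, then S⁻¹(g) = Σₙ (Σ_{k=0}^n (n!/k!) bₖ) βₙ. -/

import Mathlib

open Filter Finset

/-- The canonical embedding `ℤ_[p] → K` (where `K` plays the role of `ℂ_p`,
a complete nontrivially normed field extension of `ℚ_[p]`). -/
noncomputable def pc (p : ℕ) [Fact p.Prime] (K : Type*) [NontriviallyNormedField K]
    [NormedAlgebra ℚ_[p] K] (x : ℤ_[p]) : K :=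
  algebraMap ℚ_[p] K x

/-- The operator `S` : `S(f)(x) = f(x) - x·f(x-1)`. -/
noncomputable def Sop (p : ℕ) [Fact p.Prime] (K : Type*) [NontriviallyNormedField K]
    [NormedAlgebra ℚ_[p] K] (f : ℤ_[p] → K) : ℤ_[p] → K :=
  fun x => f x - pc p K x * f (x - 1)

/-- The Mahler basis function `βₙ(x) = C(x,n) = x(x-1)⋯(x-n+1)/n!`, valued in `K`. -/
noncomputable def bK (p : ℕ) [Fact p.Prime] (K : Type*) [NontriviallyNormedField K]
    [NormedAlgebra ℚ_[p] K] (n : ℕ) (x : ℤ_[p]) : K :=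
  (∏ i ∈ Finset.range n, (pc p K x - (i : K))) / (n.factorial : K)

/-! ### Auxiliary lemmas -/

section Aux

variable {p : ℕ} [Fact p.Prime] {K : Type*} [NontriviallyNormedField K]
    [NormedAlgebra ℚ_[p] K]

lemma aux_smeval_descPochhammer {S : Type*} [CommRing S] (y : S) (n : ℕ) :
    (descPochhammer ℤ n).smeval y = ∏ i ∈ range n, (y - i) := by
  induction n with
  | zero => simp [descPochhammer_zero, Polynomial.smeval_one]
  | succ n ih =>
      rw [descPochhammer_succ_right, Polynomial.smeval_mul, ih, prod_range_succ,
        Polynomial.smeval_sub, Polynomial.smeval_X, Polynomial.smeval_natCast]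
      simp

lemma aux_mahler_eq (n : ℕ) (x : ℤ_[p]) :
    (mahler n x : ℚ_[p]) = (∏ i ∈ range n, ((x : ℚ_[p]) - i)) / (n.factorial : ℚ_[p]) := by
  have h := Ring.descPochhammer_eq_factorial_smul_choose (R := ℤ_[p]) x n
  rw [aux_smeval_descPochhammer] at h
  have h2 : ((∏ i ∈ range n, (x - (i : ℤ_[p])) : ℤ_[p]) : ℚ_[p])
      = (n.factorial : ℚ_[p]) * (mahler n x : ℚ_[p]) := by
    rw [h, mahler_apply]
    push_cast [nsmul_eq_mul]
    ring
  have h3 : ((∏ i ∈ range n, (x - (i : ℤ_[p])) : ℤ_[p]) : ℚ_[p])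
      = ∏ i ∈ range n, ((x : ℚ_[p]) - i) := by
    rw [show ((∏ i ∈ range n, (x - (i : ℤ_[p])) : ℤ_[p]) : ℚ_[p])
        = PadicInt.Coe.ringHom (∏ i ∈ range n, (x - (i : ℤ_[p]))) from rfl, map_prod]
    exact Finset.prod_congr rfl fun i _ => by norm_cast
  rw [eq_div_iff (by exact_mod_cast n.factorial_ne_zero), mul_comm, ← h3, h2]

lemma aux_bK_eq (n : ℕ) (x : ℤ_[p]) :
    bK p K n x = algebraMap ℚ_[p] K (mahler n x) := by
  rw [aux_mahler_eq, bK, map_div₀, map_prod]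
  congr 1
  · exact Finset.prod_congr rfl fun i _ => by rw [map_sub, map_natCast]; rfl
  · rw [map_natCast]

lemma aux_norm_bK_le (n : ℕ) (x : ℤ_[p]) : ‖bK p K n x‖ ≤ 1 := by
  rw [aux_bK_eq, norm_algebraMap', mahler_apply, PadicInt.padic_norm_e_of_padicInt]
  exact PadicInt.norm_le_one _

lemma aux_charZero (p : ℕ) [Fact p.Prime] (K : Type*) [NontriviallyNormedField K]
    [NormedAlgebra ℚ_[p] K] : CharZero K :=
  charZero_of_injective_algebraMap (algebraMap ℚ_[p] K).injective

lemma aux_norm_natCast_le_one' (p : ℕ) [Fact p.Prime] (K : Type*) [NontriviallyNormedField K]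
    [NormedAlgebra ℚ_[p] K] (n : ℕ) : ‖(n : K)‖ ≤ 1 := by
  rw [← map_natCast (algebraMap ℚ_[p] K), norm_algebraMap']
  exact_mod_cast Padic.norm_int_le_one (p := p) (n : ℤ)

lemma aux_ultra (p : ℕ) [Fact p.Prime] (K : Type*) [NontriviallyNormedField K]
    [NormedAlgebra ℚ_[p] K] : IsUltrametricDist K :=
  IsUltrametricDist.isUltrametricDist_of_forall_norm_natCast_le_one
    (aux_norm_natCast_le_one' p K)

/-- The key identity `x · βₙ(x-1) = (n+1) · βₙ₊₁(x)`. -/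
lemma aux_key (n : ℕ) (x : ℤ_[p]) :
    pc p K x * bK p K n (x - 1) = ((n : K) + 1) * bK p K (n + 1) x := by
  haveI : CharZero K := aux_charZero p K
  have hpc : pc p K (x - 1) = pc p K x - 1 := by
    simp [pc, map_sub, map_one]
  have hprod : ∏ i ∈ range n, (pc p K (x - 1) - (i : K))
      = ∏ i ∈ range n, (pc p K x - ((i : K) + 1)) := by
    refine Finset.prod_congr rfl fun i _ => by rw [hpc]; ring
  have hshift : pc p K x * ∏ i ∈ range n, (pc p K x - ((i : K) + 1))
      = ∏ i ∈ range (n + 1), (pc p K x - (i : K)) := by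
    rw [prod_range_succ']
    push_cast
    ring
  have h1 : (n.factorial : K) ≠ 0 := by exact_mod_cast n.factorial_ne_zero
  have h2 : ((n : K) + 1) ≠ 0 := by exact_mod_cast Nat.cast_add_one_ne_zero (R := K) n
  rw [bK, bK, hprod, ← hshift, Nat.factorial_succ]
  push_cast
  field_simp

/-- The norm of `n!` in `K` tends to zero. -/
lemma aux_factorial_tendsto (p : ℕ) [Fact p.Prime] (K : Type*) [NontriviallyNormedField K]
    [NormedAlgebra ℚ_[p] K] :
    Tendsto (fun n : ℕ => ‖(n.factorial : K)‖) atTop (nhds 0) := by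
  have hp1 : (1 : ℕ) < p := (Fact.out : p.Prime).one_lt
  -- `p ^ (n / p) ∣ n!`
  have hdvd : ∀ n : ℕ, p ^ (n / p) ∣ n.factorial := by
    intro n
    have h1 : p ^ (n / p) ∣ (p * (n / p)).factorial := by
      have := padicValNat_factorial_mul (p := p) (n / p)
      calc p ^ (n / p) ∣ p ^ padicValNat p (p * (n / p)).factorial :=
            pow_dvd_pow p (by omega)
        _ ∣ (p * (n / p)).factorial := pow_padicValNat_dvd
    exact h1.trans (Nat.factorial_dvd_factorial (by
      rw [mul_comm]; exact Nat.div_mul_le_self n p))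
  -- hence a norm bound
  have hbound : ∀ n : ℕ, ‖(n.factorial : K)‖ ≤ ((p : ℝ)⁻¹) ^ (n / p) := by
    intro n
    obtain ⟨t, ht⟩ := hdvd n
    have : ((n.factorial : ℚ_[p])) = (p : ℚ_[p]) ^ (n / p) * (t : ℚ_[p]) := by
      exact_mod_cast congrArg (fun m : ℕ => (m : ℚ_[p])) ht
    rw [← map_natCast (algebraMap ℚ_[p] K), norm_algebraMap', this, norm_mul, norm_pow,
      Padic.norm_p]
    calc ((p:ℝ)⁻¹) ^ (n / p) * ‖(t : ℚ_[p])‖ ≤ ((p:ℝ)⁻¹) ^ (n / p) * 1 := by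
          apply mul_le_mul_of_nonneg_left _ (by positivity)
          exact_mod_cast Padic.norm_int_le_one (p := p) (t : ℤ)
      _ = ((p:ℝ)⁻¹) ^ (n / p) := mul_one _
  have hlim : Tendsto (fun n : ℕ => ((p : ℝ)⁻¹) ^ (n / p)) atTop (nhds 0) := by
    have h1 : Tendsto (fun n : ℕ => n / p) atTop atTop := by
      apply tendsto_atTop_atTop.mpr
      intro b
      exact ⟨b * p, fun a ha => Nat.le_div_iff_mul_le (by omega) |>.mpr ha⟩
    have h2 : Tendsto (fun k : ℕ => ((p : ℝ)⁻¹) ^ k) atTop (nhds 0) := by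
      apply tendsto_pow_atTop_nhds_zero_of_lt_one (by positivity)
      rw [inv_lt_one_iff₀]
      right; exact_mod_cast hp1
    exact h2.comp h1
  exact squeeze_zero (fun n => norm_nonneg _) hbound hlim

/-- If `b → 0` then the transformed coefficients `cₙ = Σ_{k≤n} (n!/k!) bₖ` tend to `0`. -/
lemma aux_c_tendsto (p : ℕ) [Fact p.Prime] (K : Type*) [NontriviallyNormedField K]
    [NormedAlgebra ℚ_[p] K] [CompleteSpace K] {b : ℕ → K} (hb : Tendsto b atTop (nhds 0)) :
    Tendsto (fun n => ∑ k ∈ range (n + 1), ((n.factorial / k.factorial : ℕ) : K) * b k)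
      atTop (nhds 0) := by
  haveI : IsUltrametricDist K := aux_ultra p K
  rw [NormedAddCommGroup.tendsto_nhds_zero] at hb ⊢
  intro ε hε
  obtain ⟨N, hN⟩ := (hb (ε / 2) (by positivity)).exists_forall_of_atTop
  set C : ℝ := 1 + ∑ k ∈ range N, ‖b k‖ / ‖(k.factorial : K)‖ with hC
  have hCpos : 0 < C := by
    rw [hC]
    have : 0 ≤ ∑ k ∈ range N, ‖b k‖ / ‖(k.factorial : K)‖ :=
      Finset.sum_nonneg fun k _ => by positivity
    linarith
  have hfac := (NormedAddCommGroup.tendsto_nhds_zero.mp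
    (by simpa using aux_factorial_tendsto p K)) (ε / (2 * C)) (by positivity)
  filter_upwards [hfac, eventually_ge_atTop N] with n hn1 hn2
  have hterm : ∀ k ∈ range (n + 1),
      ‖((n.factorial / k.factorial : ℕ) : K) * b k‖ ≤ ε / 2 := by
    intro k hk
    rw [mem_range] at hk
    by_cases hkN : N ≤ k
    · calc ‖((n.factorial / k.factorial : ℕ) : K) * b k‖
          = ‖((n.factorial / k.factorial : ℕ) : K)‖ * ‖b k‖ := norm_mul _ _
        _ ≤ 1 * ‖b k‖ := by
            apply mul_le_mul_of_nonneg_right (aux_norm_natCast_le_one' p K _) (norm_nonneg _)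
        _ ≤ ε / 2 := by rw [one_mul]; exact (hN k hkN).le
    · push_neg at hkN
      have hkn : k ≤ n := by omega
      have hdiv : (n.factorial / k.factorial) * k.factorial = n.factorial :=
        Nat.div_mul_cancel (Nat.factorial_dvd_factorial hkn)
      have hknorm : ‖(k.factorial : K)‖ ≠ 0 := by
        simp only [ne_eq, norm_eq_zero]
        haveI : CharZero K := aux_charZero p K
        exact_mod_cast k.factorial_ne_zero
      have hnorm : ‖((n.factorial / k.factorial : ℕ) : K)‖
          = ‖(n.factorial : K)‖ / ‖(k.factorial : K)‖ := by
        rw [eq_div_iff hknorm, ← norm_mul, ← Nat.cast_mul, hdiv]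
      have hCk : ‖b k‖ / ‖(k.factorial : K)‖ ≤ C := by
        rw [hC]
        have h1 : ‖b k‖ / ‖(k.factorial : K)‖
            ≤ ∑ j ∈ range N, ‖b j‖ / ‖(j.factorial : K)‖ :=
          Finset.single_le_sum (f := fun j => ‖b j‖ / ‖(j.factorial : K)‖)
            (fun j _ => by positivity) (mem_range.mpr hkN)
        linarith
      calc ‖((n.factorial / k.factorial : ℕ) : K) * b k‖
          = ‖(n.factorial : K)‖ * (‖b k‖ / ‖(k.factorial : K)‖) := by
            rw [norm_mul, hnorm]; ring
        _ ≤ (ε / (2 * C)) * C := by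
            apply mul_le_mul (le_of_lt (by simpa using hn1)) hCk (by positivity)
              (by positivity)
        _ = ε / 2 := by field_simp
  calc ‖∑ k ∈ range (n + 1), ((n.factorial / k.factorial : ℕ) : K) * b k‖
      ≤ ε / 2 := IsUltrametricDist.norm_sum_le_of_forall_le_of_nonneg (by positivity) hterm
    _ < ε := by linarith

end Aux

/-- `S` is a bijective `K`-linear automorphism of `C(ℤ_[p], K)`
(it is injective and surjective on continuous functions, and linear), and if
`g = Σₖ bₖ βₖ` then `S⁻¹ g = Σₙ (Σ_{k=0}^n (n!/k!) bₖ) βₙ`. -/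
theorem stmt_4 (p : ℕ) [Fact p.Prime] (K : Type*) [NontriviallyNormedField K]
    [NormedAlgebra ℚ_[p] K] [CompleteSpace K] :
    (∀ (f g : ℤ_[p] → K) (c : K), Sop p K (c • f + g) = c • Sop p K f + Sop p K g) ∧
    (∀ f g : ℤ_[p] → K, Continuous f → Continuous g →
      Sop p K f = Sop p K g → f = g) ∧
    (∀ g : ℤ_[p] → K, Continuous g → ∃ f : ℤ_[p] → K, Continuous f ∧ Sop p K f = g) ∧
    (∀ (g : ℤ_[p] → K) (b : ℕ → K), Continuous g → Tendsto b atTop (nhds 0) →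
      (∀ x, g x = ∑' n : ℕ, b n * bK p K n x) →
      ∀ (f : ℤ_[p] → K), Continuous f → Sop p K f = g →
        ∀ x, f x = ∑' n : ℕ,
          (∑ k ∈ Finset.range (n + 1), ((n.factorial / k.factorial : ℕ) : K) * b k)
            * bK p K n x) := by
  haveI : IsUltrametricDist K := aux_ultra p K
  haveI : CharZero K := aux_charZero p K
  letI : Algebra ℤ_[p] K := ((algebraMap ℚ_[p] K).comp PadicInt.Coe.ringHom).toAlgebra
  haveI : IsBoundedSMul ℤ_[p] K := IsBoundedSMul.of_norm_smul_le fun r x => by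
    show ‖algebraMap ℚ_[p] K (r : ℚ_[p]) * x‖ ≤ ‖r‖ * ‖x‖
    rw [norm_mul, norm_algebraMap', PadicInt.padic_norm_e_of_padicInt]
  -- injectivity
  have hinj : ∀ f g : ℤ_[p] → K, Continuous f → Continuous g →
      Sop p K f = Sop p K g → f = g := by
    intro f g hf hg hS
    have key : ∀ n : ℕ, f (n : ℤ_[p]) = g (n : ℤ_[p]) := by
      intro n
      induction n with
      | zero =>
        have h0 := congrFun hS 0
        simp only [Sop] at h0
        have hpc0 : pc p K 0 = 0 := by simp [pc]
        rw [hpc0, zero_mul, sub_zero, zero_mul, sub_zero] at h0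
        simpa using h0
      | succ n ih =>
        have h2 := congrFun hS ((n + 1 : ℕ) : ℤ_[p])
        simp only [Sop] at h2
        have h3 : (((n + 1 : ℕ) : ℤ_[p]) - 1) = (n : ℤ_[p]) := by push_cast; ring
        rw [h3, ih] at h2
        exact sub_left_inj.mp h2
    exact PadicInt.denseRange_natCast.equalizer hf hg (funext key)
  -- pointwise summability
  have hsum : ∀ (a : ℕ → K), Tendsto a atTop (nhds 0) → ∀ x : ℤ_[p],
      Summable (fun n => a n * bK p K n x) := by
    intro a ha x
    apply NonarchimedeanAddGroup.summable_of_tendsto_cofinite_zero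
    rw [Nat.cofinite_eq_atTop, tendsto_zero_iff_norm_tendsto_zero]
    apply squeeze_zero (fun n => norm_nonneg _) (g := fun n => ‖a n‖)
    · intro n
      rw [norm_mul]
      exact mul_le_of_le_one_right (norm_nonneg _) (aux_norm_bK_le n x)
    · rw [← tendsto_zero_iff_norm_tendsto_zero]
      exact ha
  -- the main construction
  have main : ∀ b : ℕ → K, Tendsto b atTop (nhds 0) →
      ∃ F : C(ℤ_[p], K),
        (∀ x, F x = ∑' n : ℕ,
          (∑ k ∈ Finset.range (n + 1), ((n.factorial / k.factorial : ℕ) : K) * b k)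
            * bK p K n x) ∧
        (∀ x, Sop p K (⇑F) x = ∑' n : ℕ, b n * bK p K n x) := by
    intro b hb
    set c : ℕ → K := fun n =>
      ∑ k ∈ Finset.range (n + 1), ((n.factorial / k.factorial : ℕ) : K) * b k with hc
    have hctend : Tendsto c atTop (nhds 0) := aux_c_tendsto p K hb
    set F : C(ℤ_[p], K) := PadicInt.mahlerSeries c with hF
    have hHS : ∀ y : ℤ_[p], HasSum (fun n => c n * bK p K n y) (F y) := by
      intro y
      have h := (PadicInt.hasSum_mahlerSeries hctend).mapL
        (ContinuousMap.evalCLM ℚ_[p] y)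
      have heq : (fun n => (ContinuousMap.evalCLM ℚ_[p] y)
          (PadicInt.mahlerTerm (c n) n)) = fun n => c n * bK p K n y := by
        funext n
        show PadicInt.mahlerTerm (c n) n y = c n * bK p K n y
        rw [PadicInt.mahlerTerm_apply, Algebra.smul_def]
        show algebraMap ℚ_[p] K ((mahler n y : ℤ_[p]) : ℚ_[p]) * _ = _
        rw [← aux_bK_eq, mul_comm]
      rw [heq] at h
      exact h
    have hFapp : ∀ y : ℤ_[p], F y = ∑' n : ℕ, c n * bK p K n y :=
      fun y => (hHS y).tsum_eq.symm
    refine ⟨F, hFapp, ?_⟩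
    intro x
    -- compute `Sop F x`
    have h3 : HasSum (fun n => c n * (((n : K) + 1) * bK p K (n + 1) x))
        (pc p K x * F (x - 1)) := by
      have := (hHS (x - 1)).mul_left (pc p K x)
      refine this.congr_fun fun n => ?_
      rw [← aux_key n x]
      ring
    set f0 : ℕ → K := fun n => match n with
      | 0 => 0
      | (m + 1) => c m * (((m : K) + 1) * bK p K (m + 1) x) with hf0
    have hcdef : ∀ n, c n
        = ∑ k ∈ Finset.range (n + 1), ((n.factorial / k.factorial : ℕ) : K) * b k :=
      fun n => rfl
    have h4 : HasSum (fun n => f0 (n + 1)) (pc p K x * F (x - 1)) := h3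
    have h5 : HasSum f0 (pc p K x * F (x - 1) + ∑ i ∈ Finset.range 1, f0 i) :=
      (hasSum_nat_add_iff (f := f0) 1).mp h4
    rw [Finset.sum_range_one, show f0 0 = 0 from rfl, add_zero] at h5
    have h6 := (hHS x).sub h5
    have h7 : (fun n => c n * bK p K n x - f0 n) = fun n => b n * bK p K n x := by
      funext n
      match n with
      | 0 =>
        show c 0 * bK p K 0 x - 0 = b 0 * bK p K 0 x
        have hc0 : c 0 = b 0 := by
          rw [hcdef 0, Finset.sum_range_one]
          simp [Nat.factorial]
        rw [hc0, sub_zero]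
      | (m + 1) =>
        show c (m + 1) * bK p K (m + 1) x - c m * (((m : K) + 1) * bK p K (m + 1) x)
          = b (m + 1) * bK p K (m + 1) x
        have hco : c (m + 1) = ((m : K) + 1) * c m + b (m + 1) := by
          rw [hcdef (m + 1), hcdef m, Finset.sum_range_succ
            (f := fun k => (((m + 1).factorial / k.factorial : ℕ) : K) * b k) (n := m + 1)]
          have hlast : ((m + 1).factorial / (m + 1).factorial : ℕ) = 1 :=
            Nat.div_self (Nat.factorial_pos _)
          rw [hlast, Nat.cast_one, one_mul]
          congr 1
          rw [Finset.mul_sum]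
          refine Finset.sum_congr rfl fun k hk => ?_
          have hk' : k ≤ m := Nat.lt_succ_iff.mp (Finset.mem_range.mp hk)
          have hnat : (m + 1).factorial / k.factorial
              = (m + 1) * (m.factorial / k.factorial) := by
            rw [Nat.factorial_succ, Nat.mul_div_assoc _ (Nat.factorial_dvd_factorial hk')]
          rw [hnat]
          push_cast
          ring
        rw [hco]
        ring
    rw [h7] at h6
    show F x - pc p K x * F (x - 1) = ∑' n : ℕ, b n * bK p K n x
    exact h6.tsum_eq.symm
  refine ⟨?_, hinj, ?_, ?_⟩
  · intro f g c
    funext x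
    simp only [Sop, Pi.add_apply, Pi.smul_apply, smul_eq_mul]
    ring
  · -- surjectivity
    intro g hg
    set b : ℕ → K := fun n => (fwdDiff (1 : ℤ_[p]))^[n] (⟨g, hg⟩ : C(ℤ_[p], K)) 0 with hbdef
    have hbt : Tendsto b atTop (nhds 0) := PadicInt.fwdDiff_tendsto_zero _
    obtain ⟨F, hF1, hF2⟩ := main b hbt
    refine ⟨⇑F, F.continuous, funext fun x => ?_⟩
    rw [hF2 x]
    have h := (PadicInt.hasSum_mahler (⟨g, hg⟩ : C(ℤ_[p], K))).mapL
      (ContinuousMap.evalCLM ℚ_[p] x)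
    have heq : (fun n => (ContinuousMap.evalCLM ℚ_[p] x)
        (PadicInt.mahlerTerm (b n) n)) = fun n => b n * bK p K n x := by
      funext n
      show PadicInt.mahlerTerm (b n) n x = b n * bK p K n x
      rw [PadicInt.mahlerTerm_apply, Algebra.smul_def]
      show algebraMap ℚ_[p] K ((mahler n x : ℤ_[p]) : ℚ_[p]) * _ = _
      rw [← aux_bK_eq, mul_comm]
    rw [heq] at h
    exact h.tsum_eq
  · -- the inversion formula
    intro g b hg hb hgeq f hf hSf
    obtain ⟨F, hF1, hF2⟩ := main b hb
    have hSF : Sop p K ⇑F = g := funext fun x => by rw [hF2 x, ← hgeq x]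
    have hfF : f = ⇑F := hinj f (⇑F) hf F.continuous (by rw [hSf, hSF])
    intro x
    rw [hfF]
    exact hF1 x
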